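/- arXiv:2212.11916 — 2 statements merged into one kernel-verified Lean document; each statement's English description precedes it below -/
import Mathlib

section
/- Let ε > 0, a₁ ∈ C¹([0,1]) with a₁(x) ≥ α > 0, and let u₁ ∈ C²([0,1]) solve -ε u₁'' - (a₁ u₁)' = f₁' on (0,1) with u₁(0) = u₁(1) = 0, where f₁ ∈ C¹([0,1]). Then ‖u₁‖_{L∞(0,1)} ≤ C‖f₁‖_{L∞(0,1)} with C depending only on α (not on ε). -/
open Set

private lemma key_9 (α : ℝ) (hα : 0 < α) (ε : ℝ) (a u f : ℝ → ℝ) (hε : 0 < ε)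
    (ha : ContDiffOn ℝ 1 a (Set.Icc 0 1))
    (haα : ∀ x ∈ Set.Icc (0 : ℝ) 1, α ≤ a x)
    (hu : ContDiffOn ℝ 2 u (Set.Icc 0 1))
    (hf : ContDiffOn ℝ 1 f (Set.Icc 0 1))
    (hode : ∀ x ∈ Set.Ioo (0 : ℝ) 1,
      -ε * deriv (deriv u) x - deriv (fun y => a y * u y) x = deriv f x)
    (hu0 : u 0 = 0) (hu1 : u 1 = 0)
    (M : ℝ) (hM : ∀ y ∈ Set.Icc (0 : ℝ) 1, |f y| ≤ M) :
    ∀ x ∈ Set.Icc (0 : ℝ) 1,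
      α * u x ≤ (ε * deriv u (1/2) + a (1/2) * u (1/2) + f (1/2)) + M := by
  set g : ℝ → ℝ := fun x => ε * deriv u x + a x * u x + f x with hg
  have hsub : Set.Ioo (0 : ℝ) 1 ⊆ Set.Icc 0 1 := Set.Ioo_subset_Icc_self
  have hu2 : ContDiffOn ℝ 2 u (Set.Ioo 0 1) := hu.mono hsub
  have ha1 : ContDiffOn ℝ 1 a (Set.Ioo 0 1) := ha.mono hsub
  have hf1 : ContDiffOn ℝ 1 f (Set.Ioo 0 1) := hf.mono hsub
  have hdu : ContDiffOn ℝ 1 (deriv u) (Set.Ioo 0 1) :=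
    hu2.deriv_of_isOpen isOpen_Ioo (by norm_num)
  have hudiff : ∀ x ∈ Set.Ioo (0 : ℝ) 1, DifferentiableAt ℝ u x := fun x hx =>
    ((hu2.differentiableOn (by norm_num)).differentiableAt (isOpen_Ioo.mem_nhds hx))
  -- g has derivative 0 on Ioo
  have hgd : ∀ x ∈ Set.Ioo (0 : ℝ) 1, HasDerivAt g 0 x := by
    intro x hx
    have hnx := isOpen_Ioo.mem_nhds hx
    have h1 : HasDerivAt (deriv u) (deriv (deriv u) x) x :=
      ((hdu.differentiableOn one_ne_zero).differentiableAt hnx).hasDerivAt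
    have h2 : HasDerivAt (fun y => a y * u y) (deriv (fun y => a y * u y) x) x :=
      (((ha1.differentiableOn one_ne_zero).differentiableAt hnx).mul (hudiff x hx)).hasDerivAt
    have h3 : HasDerivAt f (deriv f x) x :=
      ((hf1.differentiableOn one_ne_zero).differentiableAt hnx).hasDerivAt
    have := ((h1.const_mul ε).add h2).add h3
    refine this.congr_deriv ?_
    have := hode x hx
    linarith
  -- g is constant on Ioo
  have hconst : ∀ y ∈ Set.Ioo (0 : ℝ) 1, g y = g (1/2) := by
    have hgen : ∀ p q : ℝ, p ∈ Set.Ioo (0 : ℝ) 1 → q ∈ Set.Ioo (0 : ℝ) 1 → p ≤ q →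
        g q = g p := by
      intro p q hp hq hpq
      have hss : Set.Icc p q ⊆ Set.Ioo (0 : ℝ) 1 := fun z hz =>
        ⟨lt_of_lt_of_le hp.1 hz.1, lt_of_le_of_lt hz.2 hq.2⟩
      have hcont : ContinuousOn g (Set.Icc p q) := fun z hz =>
        ((hgd z (hss hz)).continuousAt).continuousWithinAt
      have hderiv : ∀ z ∈ Set.Ico p q, HasDerivWithinAt g 0 (Set.Ici z) z := fun z hz =>
        (hgd z (hss ⟨hz.1, hz.2.le⟩)).hasDerivWithinAt
      exact constant_of_has_deriv_right_zero hcont hderiv q ⟨hpq, le_rfl⟩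
    intro y hy
    have hhalf : (1/2 : ℝ) ∈ Set.Ioo (0 : ℝ) 1 := by norm_num
    rcases le_total y (1/2 : ℝ) with h | h
    · exact (hgen y (1/2) hy hhalf h).symm
    · exact hgen (1/2) y hhalf hy h
  set c : ℝ := g (1/2) with hcdef
  -- max point
  obtain ⟨xm, hxm, hmax⟩ :=
    isCompact_Icc.exists_isMaxOn (Set.nonempty_Icc.2 zero_le_one) hu.continuousOn
  have hmax' : ∀ y ∈ Set.Icc (0 : ℝ) 1, u y ≤ u xm := hmax
  have hm0 : 0 ≤ u xm := hu0 ▸ hmax' 0 (Set.left_mem_Icc.2 zero_le_one)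
  have hkey : α * u xm ≤ c + M := by
    rcases lt_or_ge 0 (u xm) with hpos | hz
    · -- interior max
      have hxmo : xm ∈ Set.Ioo (0 : ℝ) 1 := by
        rcases hxm with ⟨h0, h1⟩
        constructor
        · rcases h0.lt_or_eq with h | h; · exact h
          · exfalso; rw [← h, hu0] at hpos; exact lt_irrefl _ hpos
        · rcases h1.lt_or_eq with h | h; · exact h
          · exfalso; rw [h, hu1] at hpos; exact lt_irrefl _ hpos
      have hloc : IsLocalMax u xm :=
        hmax.isLocalMax (Filter.mem_of_superset (isOpen_Ioo.mem_nhds hxmo) hsub)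
      have hd0 : deriv u xm = 0 := hloc.deriv_eq_zero
      have hcx : c = g xm := (hconst xm hxmo).symm
      have hfx : -M ≤ f xm := neg_le_of_abs_le (hM xm hxm)
      have hau : α * u xm ≤ a xm * u xm :=
        mul_le_mul_of_nonneg_right (haα xm hxm) hpos.le
      rw [hcx]; simp only [hg, hd0]
      nlinarith
    · -- u ≤ 0 everywhere; show -M ≤ c
      have hux : u xm = 0 := le_antisymm hz hm0
      rw [hux, mul_zero]
      have hcM : -M ≤ c := by
        refine le_of_forall_pos_le_add ?_
        intro δ hδ
        have hcont1 : ContinuousWithinAt (fun z => a z * u z) (Set.Icc 0 1) 1 :=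
          (ha.continuousOn.mul hu.continuousOn) 1 (Set.right_mem_Icc.2 zero_le_one)
        rw [Metric.continuousWithinAt_iff] at hcont1
        obtain ⟨η, hη, hball⟩ := hcont1 δ hδ
        set t : ℝ := max (1 - η/2) (1/2) with htdef
        have ht1 : t < 1 := max_lt (by linarith) (by norm_num)
        have ht0 : 0 < t := lt_of_lt_of_le (by norm_num) (le_max_right _ _)
        have htI : Set.Icc t 1 ⊆ Set.Icc (0 : ℝ) 1 := fun z hz => ⟨le_trans ht0.le hz.1, hz.2⟩
        have hcu : ContinuousOn u (Set.Icc t 1) := hu.continuousOn.mono htI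
        have hdu' : DifferentiableOn ℝ u (Set.Ioo t 1) := fun z hz =>
          (hudiff z ⟨lt_trans ht0 hz.1, hz.2⟩).differentiableWithinAt
        obtain ⟨ξ, hξ, hslope⟩ := exists_deriv_eq_slope u ht1 hcu hdu'
        have hξo : ξ ∈ Set.Ioo (0 : ℝ) 1 := ⟨lt_trans ht0 hξ.1, hξ.2⟩
        have hut : u t ≤ 0 := by
          have := hmax' t ⟨ht0.le, ht1.le⟩
          rw [hux] at this; exact this
        have hder : 0 ≤ deriv u ξ := by
          rw [hslope, hu1]
          apply div_nonneg (by linarith) (by linarith)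
        have hnear : |a ξ * u ξ - a 1 * u 1| < δ := by
          apply hball (htI ⟨hξ.1.le, hξ.2.le⟩)
          rw [Real.dist_eq]
          have h1t : 1 - η/2 ≤ t := le_max_left _ _
          have hξ1 : t < ξ := hξ.1
          have hξ2 : ξ < 1 := hξ.2
          rw [abs_of_nonpos (by linarith)]
          linarith
        rw [hu1, mul_zero, sub_zero] at hnear
        have hfξ : -M ≤ f ξ := neg_le_of_abs_le (hM ξ (hsub hξo))
        have hcξ : c = g ξ := (hconst ξ hξo).symm
        have hεd : 0 ≤ ε * deriv u ξ := mul_nonneg hε.le hder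
        have habs : -δ < a ξ * u ξ := by
          have := abs_lt.1 hnear; linarith [this.1]
        rw [hcξ]; simp only [hg]; linarith
      linarith
  intro x hx
  calc α * u x ≤ α * u xm := mul_le_mul_of_nonneg_left (hmax' x hx) hα.le
    _ ≤ c + M := hkey

theorem stmt_9 (α : ℝ) (hα : 0 < α) :
    ∃ C : ℝ, 0 < C ∧
      ∀ (ε : ℝ) (a u f : ℝ → ℝ), 0 < ε →
        ContDiffOn ℝ 1 a (Set.Icc 0 1) →
        (∀ x ∈ Set.Icc (0 : ℝ) 1, α ≤ a x) →
        ContDiffOn ℝ 2 u (Set.Icc 0 1) →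
        ContDiffOn ℝ 1 f (Set.Icc 0 1) →
        (∀ x ∈ Set.Ioo (0 : ℝ) 1,
          -ε * deriv (deriv u) x - deriv (fun y => a y * u y) x = deriv f x) →
        u 0 = 0 → u 1 = 0 →
        ∀ M : ℝ, (∀ y ∈ Set.Icc (0 : ℝ) 1, |f y| ≤ M) →
          ∀ x ∈ Set.Icc (0 : ℝ) 1, |u x| ≤ C * M := by
  refine ⟨2 / α, by positivity, ?_⟩
  intro ε a u f hε ha haα hu hf hode hu0 hu1 M hM x hx
  have h0I : (0 : ℝ) ∈ Set.Icc (0 : ℝ) 1 := Set.left_mem_Icc.2 zero_le_one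
  -- negated data
  have hu' : ContDiffOn ℝ 2 (fun y => -u y) (Set.Icc 0 1) := hu.neg
  have hf' : ContDiffOn ℝ 1 (fun y => -f y) (Set.Icc 0 1) := hf.neg
  have hode' : ∀ z ∈ Set.Ioo (0 : ℝ) 1,
      -ε * deriv (deriv (fun y => -u y)) z - deriv (fun y => a y * -u y) z
        = deriv (fun y => -f y) z := by
    intro z hz
    have e1 : deriv (fun y => -u y) = fun y => -deriv u y := deriv.neg'
    have e2 : deriv (deriv (fun y => -u y)) z = -deriv (deriv u) z := by
      rw [e1]; exact deriv.neg
    have e3 : deriv (fun y => a y * -u y) z = -deriv (fun y => a y * u y) z := by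
      have : (fun y => a y * -u y) = fun y => -(a y * u y) := by funext y; ring
      rw [this]; exact deriv.neg
    have e4 : deriv (fun y => -f y) z = -deriv f z := deriv.neg
    rw [e2, e3, e4]
    have := hode z hz
    linarith
  have hM' : ∀ y ∈ Set.Icc (0 : ℝ) 1, |(fun y => -f y) y| ≤ M := by
    intro y hy; simp only [abs_neg]; exact hM y hy
  have hkey := key_9 α hα ε a u f hε ha haα hu hf hode hu0 hu1 M hM
  have hkey' := key_9 α hα ε a (fun y => -u y) (fun y => -f y) hε ha haα hu' hf' hode'
    (by simp [hu0]) (by simp [hu1]) M hM'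
  set c : ℝ := ε * deriv u (1/2) + a (1/2) * u (1/2) + f (1/2) with hc
  have hc' : ε * deriv (fun y => -u y) (1/2 : ℝ) + a (1/2) * -u (1/2) + -f (1/2) = -c := by
    rw [deriv.fun_neg]; simp only [hc]; ring
  -- bounds on c from x = 0
  have hb1 : -M ≤ c := by have := hkey 0 h0I; rw [hu0, mul_zero] at this; linarith
  have hb2 : c ≤ M := by
    have := hkey' 0 h0I
    simp only [hu0, neg_zero, mul_zero, zero_mul] at this
    rw [hc'] at this; linarith
  have h1 : α * u x ≤ 2 * M := by have := hkey x hx; linarith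
  have h2 : α * -u x ≤ 2 * M := by
    have h3 : α * -u x ≤ -c + M := by
      have := hkey' x hx
      rw [hc'] at this; exact this
    linarith
  rw [abs_le]
  constructor
  · rw [neg_le, div_mul_eq_mul_div, le_div_iff₀ hα]
    linarith
  · rw [div_mul_eq_mul_div, le_div_iff₀ hα]
    linarith
end

section
/- Let ε > 0, b₂ ∈ C([0,1]) with b₂(x) ≥ β > 0, and let u₂ ∈ C²([0,1]) solve -ε u₂'' + b₂ u₂ = f₂' on (0,1) with u₂(0) = u₂(1) = 0, where f₂ ∈ C¹([0,1]). Then ‖u₂‖_{L∞(0,1)} ≤ C·ε^{-1/2}·‖f₂‖_{L∞(0,1)} with C depending only on β. -/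
open Set

private lemma key10 (β ε : ℝ) (hβ : 0 < β) (hε : 0 < ε) (b u f : ℝ → ℝ)
    (hb : ContinuousOn b (Set.Icc 0 1))
    (hbβ : ∀ x ∈ Set.Icc (0:ℝ) 1, β ≤ b x)
    (hu : ContDiffOn ℝ 2 u (Set.Icc 0 1))
    (hf : ContDiffOn ℝ 1 f (Set.Icc 0 1))
    (heq : ∀ x ∈ Set.Ioo (0:ℝ) 1, -ε * deriv (deriv u) x + b x * u x = deriv f x)
    (h0 : u 0 = 0) (M : ℝ) (hM : ∀ y ∈ Set.Icc (0:ℝ) 1, |f y| ≤ M)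
    (x₀ : ℝ) (hx₀ : x₀ ∈ Set.Ioo (0:ℝ) 1)
    (hmax : ∀ x ∈ Set.Icc (0:ℝ) 1, u x ≤ u x₀) (hpos : 0 < u x₀) :
    u x₀ ≤ 4 / Real.sqrt β * (1 / Real.sqrt ε) * M := by
  set m := u x₀ with hm
  have hcu : ContinuousOn u (Icc 0 1) := hu.continuousOn
  have huo : ContDiffOn ℝ 2 u (Ioo 0 1) := hu.mono Ioo_subset_Icc_self
  have hfo : ContDiffOn ℝ 1 f (Ioo 0 1) := hf.mono Ioo_subset_Icc_self
  have hgd : ContDiffOn ℝ 1 (deriv u) (Ioo 0 1) :=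
    huo.deriv_of_isOpen isOpen_Ioo (by norm_num)
  have hgc : ContinuousOn (deriv u) (Ioo 0 1) :=
    huo.continuousOn_deriv_of_isOpen isOpen_Ioo (by norm_num)
  have hhc : ContinuousOn (deriv (deriv u)) (Ioo 0 1) :=
    hgd.continuousOn_deriv_of_isOpen isOpen_Ioo le_rfl
  have hfc : ContinuousOn (deriv f) (Ioo 0 1) :=
    hfo.continuousOn_deriv_of_isOpen isOpen_Ioo le_rfl
  have hud : ∀ x ∈ Ioo (0:ℝ) 1, HasDerivAt u (deriv u x) x := by
    intro x hx
    exact ((huo.contDiffAt (isOpen_Ioo.mem_nhds hx)).differentiableAt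
      (by norm_num)).hasDerivAt
  have hgdd : ∀ x ∈ Ioo (0:ℝ) 1, HasDerivAt (deriv u) (deriv (deriv u) x) x := by
    intro x hx
    exact ((hgd.contDiffAt (isOpen_Ioo.mem_nhds hx)).differentiableAt
      (by norm_num)).hasDerivAt
  have hfd : ∀ x ∈ Ioo (0:ℝ) 1, HasDerivAt f (deriv f x) x := by
    intro x hx
    exact ((hfo.contDiffAt (isOpen_Ioo.mem_nhds hx)).differentiableAt
      (by norm_num)).hasDerivAt
  -- integral identity
  have hiden : ∀ p q : ℝ, p ∈ Ioo (0:ℝ) 1 → q ∈ Ioo (0:ℝ) 1 → p ≤ q →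
      (∫ t in p..q, b t * u t) = (f q - f p) + ε * (deriv u q - deriv u p) := by
    intro p q hp hq hpq
    have hsub : uIcc p q ⊆ Ioo (0:ℝ) 1 := by
      rw [uIcc_of_le hpq]
      exact fun t ht => ⟨lt_of_lt_of_le hp.1 ht.1, lt_of_le_of_lt ht.2 hq.2⟩
    have hintf : IntervalIntegrable (deriv f) MeasureTheory.volume p q :=
      (hfc.mono hsub).intervalIntegrable
    have hinth : IntervalIntegrable (fun t => ε * deriv (deriv u) t)
        MeasureTheory.volume p q :=
      ((hhc.mono hsub).const_smul ε).intervalIntegrable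
    have h1 : (∫ t in p..q, deriv f t) = f q - f p :=
      intervalIntegral.integral_eq_sub_of_hasDerivAt (fun t ht => hfd t (hsub ht)) hintf
    have h2 : (∫ t in p..q, deriv (deriv u) t) = deriv u q - deriv u p :=
      intervalIntegral.integral_eq_sub_of_hasDerivAt (fun t ht => hgdd t (hsub ht))
        (hhc.mono hsub).intervalIntegrable
    have h3 : (∫ t in p..q, b t * u t)
        = ∫ t in p..q, (deriv f t + ε * deriv (deriv u) t) := by
      apply intervalIntegral.integral_congr
      intro t ht
      have := heq t (hsub ht)
      simp only
      linarith
    rw [h3, intervalIntegral.integral_add hintf hinth,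
      intervalIntegral.integral_const_mul, h1, h2]
  have hmpos : 0 < m := hpos
  -- the point a
  have hIVT : ∃ a₀ ∈ Icc 0 x₀, u a₀ = m / 2 := by
    have hsub : Icc (0:ℝ) x₀ ⊆ Icc (0:ℝ) 1 :=
      Icc_subset_Icc le_rfl hx₀.2.le
    have := intermediate_value_Icc hx₀.1.le (hcu.mono hsub)
    have hmem : m / 2 ∈ Icc (u 0) (u x₀) := by
      rw [h0]; constructor <;> [linarith; linarith]
    obtain ⟨a₀, ha₀, ha₀'⟩ := this hmem
    exact ⟨a₀, ha₀, ha₀'⟩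
  set S : Set ℝ := {x | x ∈ Icc 0 x₀ ∧ u x = m / 2} with hS
  have hSne : S.Nonempty := by
    obtain ⟨a₀, h1, h2⟩ := hIVT; exact ⟨a₀, h1, h2⟩
  have hSclosed : IsClosed S := by
    have : S = Icc 0 x₀ ∩ u ⁻¹' {m / 2} := by
      ext t; simp [hS]
    rw [this]
    exact (hcu.mono (Icc_subset_Icc le_rfl hx₀.2.le)).preimage_isClosed_of_isClosed
      isClosed_Icc isClosed_singleton
  have hScompact : IsCompact S :=
    isCompact_Icc.of_isClosed_subset hSclosed (fun t ht => ht.1)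
  set a := sSup S with ha_def
  have haS : a ∈ S := hScompact.sSup_mem hSne
  have hua : u a = m / 2 := haS.2
  have ha_lt : a < x₀ := by
    rcases lt_or_eq_of_le haS.1.2 with h | h
    · exact h
    · exfalso; rw [h] at hua; rw [← hm] at hua; linarith
  have ha_pos : 0 < a := by
    rcases lt_or_eq_of_le haS.1.1 with h | h
    · exact h
    · exfalso; rw [← h] at hua; rw [h0] at hua; linarith
  have haI : a ∈ Ioo (0:ℝ) 1 := ⟨ha_pos, lt_trans ha_lt hx₀.2⟩
  have hbddS : BddAbove S := BddAbove.mono (fun t ht => ht.1) bddAbove_Icc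
  -- u ≥ m/2 on [a, x₀]
  have hge : ∀ x ∈ Icc a x₀, m / 2 ≤ u x := by
    intro x hx
    by_contra hlt
    push_neg at hlt
    have hxa : a < x := by
      rcases lt_or_eq_of_le hx.1 with h | h
      · exact h
      · exfalso; rw [← h] at hlt; linarith
    have hsub : Icc x x₀ ⊆ Icc (0:ℝ) 1 :=
      Icc_subset_Icc (le_trans ha_pos.le (le_trans hxa.le le_rfl)) hx₀.2.le
    have := intermediate_value_Icc hx.2 (hcu.mono hsub)
    have hmem : m / 2 ∈ Icc (u x) (u x₀) := ⟨hlt.le, by rw [← hm]; linarith⟩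
    obtain ⟨y, hy, hy'⟩ := this hmem
    have hyS : y ∈ S := ⟨⟨le_trans ha_pos.le (le_trans hxa.le hy.1), hy.2⟩, hy'⟩
    have : y ≤ a := le_csSup hbddS hyS
    linarith [hy.1]
  -- deriv u x₀ = 0
  have hg0 : deriv u x₀ = 0 := by
    apply IsLocalMax.deriv_eq_zero
    have : Icc (0:ℝ) 1 ∈ nhds x₀ := Icc_mem_nhds hx₀.1 hx₀.2
    filter_upwards [this] with y hy
    exact hmax y hy
  -- deriv u a ≥ 0
  have hga : 0 ≤ deriv u a := by
    have hda := hud a haI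
    rw [hasDerivAt_iff_tendsto_slope] at hda
    have hda' : Filter.Tendsto (slope u a) (nhdsWithin a (Ioi a)) (nhds (deriv u a)) :=
      hda.mono_left (nhdsWithin_mono a (fun y hy => ne_of_gt hy))
    refine ge_of_tendsto hda' ?_
    filter_upwards [Ioo_mem_nhdsGT_of_mem ⟨le_rfl, ha_lt⟩] with y hy
    rw [slope_def_field]
    apply div_nonneg
    · have := hge y ⟨hy.1.le, hy.2.le⟩
      linarith [hua]
    · linarith [hy.1]
  have hM2 : ∀ p ∈ Icc (0:ℝ) 1, ∀ q ∈ Icc (0:ℝ) 1, f q - f p ≤ 2 * M := by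
    intro p hp q hq
    have h1 := abs_le.1 (hM p hp)
    have h2 := abs_le.1 (hM q hq)
    linarith
  have hsubax : Icc a x₀ ⊆ Icc (0:ℝ) 1 := Icc_subset_Icc ha_pos.le hx₀.2.le
  -- step (i): ε * deriv u x ≤ 2M on [a, x₀]
  have hstepi : ∀ x ∈ Icc a x₀, ε * deriv u x ≤ 2 * M := by
    intro x hx
    have hxI : x ∈ Ioo (0:ℝ) 1 :=
      ⟨lt_of_lt_of_le ha_pos hx.1, lt_of_le_of_lt hx.2 hx₀.2⟩
    have hid := hiden x x₀ hxI hx₀ hx.2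
    rw [hg0] at hid
    have hnn : 0 ≤ ∫ t in x..x₀, b t * u t := by
      apply intervalIntegral.integral_nonneg hx.2
      intro t ht
      have htax : t ∈ Icc a x₀ := ⟨le_trans hx.1 ht.1, ht.2⟩
      have h1 := hbβ t (hsubax htax)
      have h2 := hge t htax
      nlinarith
    have hf2 := hM2 x (hsubax hx) x₀ (hsubax ⟨ha_lt.le, le_rfl⟩)
    nlinarith
  -- the integral over [a, x₀]
  have hbuint : IntervalIntegrable (fun t => b t * u t) MeasureTheory.volume a x₀ := by
    apply ContinuousOn.intervalIntegrable
    have hsub' : uIcc a x₀ ⊆ Icc (0:ℝ) 1 := by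
      rw [uIcc_of_le ha_lt.le]; exact hsubax
    exact ((hb.mono hsub').mul (hcu.mono hsub'))
  have hlow : β * (m / 2) * (x₀ - a) ≤ ∫ t in a..x₀, b t * u t := by
    have hc : (∫ _ in a..x₀, β * (m / 2)) = β * (m / 2) * (x₀ - a) := by
      rw [intervalIntegral.integral_const]; ring_nf
    rw [← hc]
    apply intervalIntegral.integral_mono_on ha_lt.le intervalIntegrable_const hbuint
    intro t ht
    have h1 := hbβ t (hsubax ht)
    have h2 := hge t ht
    nlinarith
  have hup : (∫ t in a..x₀, b t * u t) ≤ 2 * M := by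
    have hid := hiden a x₀ haI hx₀ ha_lt.le
    rw [hg0] at hid
    have hf2 := hM2 a (hsubax ⟨le_rfl, ha_lt.le⟩) x₀ (hsubax ⟨ha_lt.le, le_rfl⟩)
    nlinarith
  -- step (ii): m/2 ≤ (x₀ - a) * (2M/ε)
  have hsubIoo : Icc a x₀ ⊆ Ioo (0:ℝ) 1 :=
    fun t ht => ⟨lt_of_lt_of_le ha_pos ht.1, lt_of_le_of_lt ht.2 hx₀.2⟩
  have hftc : (∫ t in a..x₀, deriv u t) = u x₀ - u a := by
    apply intervalIntegral.integral_eq_sub_of_hasDerivAt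
    · intro t ht
      rw [uIcc_of_le ha_lt.le] at ht
      exact hud t (hsubIoo ht)
    · apply ContinuousOn.intervalIntegrable
      apply hgc.mono
      rw [uIcc_of_le ha_lt.le]
      exact hsubIoo
  have hgint : IntervalIntegrable (deriv u) MeasureTheory.volume a x₀ := by
    apply ContinuousOn.intervalIntegrable
    apply hgc.mono
    rw [uIcc_of_le ha_lt.le]
    exact hsubIoo
  have hstepii : m / 2 ≤ (x₀ - a) * (2 * M / ε) := by
    have hmono : (∫ t in a..x₀, deriv u t) ≤ ∫ _ in a..x₀, 2 * M / ε := by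
      apply intervalIntegral.integral_mono_on ha_lt.le hgint intervalIntegrable_const
      intro t ht
      have := hstepi t ht
      rw [le_div_iff₀ hε]
      linarith
    rw [hftc, intervalIntegral.integral_const, smul_eq_mul] at hmono
    rw [hua, ← hm] at hmono
    linarith
  -- combine
  have hM0 : 0 ≤ M := le_trans (abs_nonneg _) (hM 0 ⟨le_rfl, zero_le_one⟩)
  have hd : 0 < x₀ - a := by linarith
  have hkey : β * m ^ 2 * ε ≤ 16 * M ^ 2 := by
    have h1 : β * (m / 2) * (x₀ - a) ≤ 2 * M := le_trans hlow hup
    have h2 : m / 2 * ε ≤ (x₀ - a) * (2 * M) := by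
      have h := mul_le_mul_of_nonneg_right hstepii hε.le
      have he : (x₀ - a) * (2 * M / ε) * ε = (x₀ - a) * (2 * M) := by
        field_simp
      rw [he] at h
      exact h
    have hA : 0 ≤ m / 2 * ε := by positivity
    have hB : (0:ℝ) ≤ 2 * M := by linarith
    have hprod : (β * (m / 2) * (x₀ - a)) * (m / 2 * ε) ≤ (2 * M) * ((x₀ - a) * (2 * M)) :=
      mul_le_mul h1 h2 hA hB
    have h4 : β * m ^ 2 * ε * (x₀ - a) ≤ 16 * M ^ 2 * (x₀ - a) := by nlinarith [hprod]
    exact le_of_mul_le_mul_right h4 hd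
  set sβ := Real.sqrt β with hsβ_def
  set sε := Real.sqrt ε with hsε_def
  have hsβ : sβ ^ 2 = β := Real.sq_sqrt hβ.le
  have hsε : sε ^ 2 = ε := Real.sq_sqrt hε.le
  have hsβp : 0 < sβ := Real.sqrt_pos.2 hβ
  have hsεp : 0 < sε := Real.sqrt_pos.2 hε
  have hfin : m * (sβ * sε) ≤ 4 * M := by
    have h1 : (m * (sβ * sε)) ^ 2 ≤ (4 * M) ^ 2 := by
      have he : (m * (sβ * sε)) ^ 2 = β * m ^ 2 * ε := by
        rw [mul_pow, mul_pow, hsβ, hsε]; ring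
      rw [he]
      nlinarith [hkey]
    calc m * (sβ * sε) = Real.sqrt ((m * (sβ * sε)) ^ 2) := by
          rw [Real.sqrt_sq (by positivity)]
      _ ≤ Real.sqrt ((4 * M) ^ 2) := Real.sqrt_le_sqrt h1
      _ = 4 * M := Real.sqrt_sq (by positivity)
  have : m ≤ 4 * M / (sβ * sε) := by
    rw [le_div_iff₀ (by positivity)]
    exact hfin
  calc m ≤ 4 * M / (sβ * sε) := this
    _ = 4 / sβ * (1 / sε) * M := by field_simp

theorem stmt_10 (β : ℝ) (hβ : 0 < β) :
    ∃ C : ℝ, 0 < C ∧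
      ∀ (ε : ℝ) (b u f : ℝ → ℝ), 0 < ε →
        ContinuousOn b (Set.Icc 0 1) →
        (∀ x ∈ Set.Icc (0 : ℝ) 1, β ≤ b x) →
        ContDiffOn ℝ 2 u (Set.Icc 0 1) →
        ContDiffOn ℝ 1 f (Set.Icc 0 1) →
        (∀ x ∈ Set.Ioo (0 : ℝ) 1,
          -ε * deriv (deriv u) x + b x * u x = deriv f x) →
        u 0 = 0 → u 1 = 0 →
        ∀ M : ℝ, (∀ y ∈ Set.Icc (0 : ℝ) 1, |f y| ≤ M) →
          ∀ x ∈ Set.Icc (0 : ℝ) 1, |u x| ≤ C * (1 / Real.sqrt ε) * M := by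
  refine ⟨4 / Real.sqrt β, by positivity, ?_⟩
  intro ε b u f hε hb hbβ hu hf heq h0 h1 M hM x hx
  obtain ⟨x₀, hx₀, hmax⟩ := isCompact_Icc.exists_isMaxOn (Set.nonempty_Icc.2 zero_le_one)
    hu.continuousOn.abs
  have hmax' : ∀ y ∈ Set.Icc (0:ℝ) 1, |u y| ≤ |u x₀| := hmax
  have hM0 : 0 ≤ M := le_trans (abs_nonneg _) (hM 0 ⟨le_rfl, zero_le_one⟩)
  refine le_trans (hmax' x hx) ?_
  rcases lt_trichotomy (u x₀) 0 with hneg | hzero | hpos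
  · -- apply key lemma to -u, -f
    have hx₀I : x₀ ∈ Set.Ioo (0:ℝ) 1 := by
      rcases hx₀ with ⟨hl, hr⟩
      constructor
      · rcases lt_or_eq_of_le hl with h | h
        · exact h
        · exfalso; rw [← h, h0] at hneg; exact lt_irrefl 0 hneg
      · rcases lt_or_eq_of_le hr with h | h
        · exact h
        · exfalso; rw [h, h1] at hneg; exact lt_irrefl 0 hneg
    have hd2 : ∀ y, deriv (deriv (fun z => -u z)) y = -deriv (deriv u) y := by
      intro y
      have e1 : deriv (fun z => -u z) = fun z => -deriv u z := funext fun z => deriv.neg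
      rw [e1, deriv.fun_neg]
    have := key10 β ε hβ hε b (fun z => -u z) (fun z => -f z) hb hbβ hu.neg hf.neg
      (by
        intro y hy
        rw [hd2 y, deriv.fun_neg]
        have := heq y hy
        linarith)
      (by simp [h0]) M
      (by intro y hy; rw [abs_neg]; exact hM y hy)
      x₀ hx₀I
      (by
        intro y hy
        have h2 := hmax' y hy
        rw [abs_of_neg hneg] at h2
        calc -u y ≤ |u y| := neg_le_abs _
          _ ≤ -u x₀ := h2)
      (by linarith)
    rw [abs_of_neg hneg]
    calc -u x₀ ≤ 4 / Real.sqrt β * (1 / Real.sqrt ε) * M := this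
      _ = 4 / Real.sqrt β * (1 / Real.sqrt ε) * M := rfl
  · rw [hzero, abs_zero]; positivity
  · have hx₀I : x₀ ∈ Set.Ioo (0:ℝ) 1 := by
      rcases hx₀ with ⟨hl, hr⟩
      constructor
      · rcases lt_or_eq_of_le hl with h | h
        · exact h
        · exfalso; rw [← h, h0] at hpos; exact lt_irrefl 0 hpos
      · rcases lt_or_eq_of_le hr with h | h
        · exact h
        · exfalso; rw [h, h1] at hpos; exact lt_irrefl 0 hpos
    have := key10 β ε hβ hε b u f hb hbβ hu hf heq h0 M hM x₀ hx₀I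
      (by
        intro y hy
        have h2 := hmax' y hy
        rw [abs_of_pos hpos] at h2
        exact le_trans (le_abs_self _) h2)
      hpos
    rw [abs_of_pos hpos]
    exact this
end
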